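/- For all z, w ∈ ℍ with Im(w) ≤ Im(z)/4, one has 0 ≤ log(|z − w̄| / |z − w|) ≤ 4 · Im(w) / Im(z), where w̄ denotes the complex conjugate of w. -/

import Mathlib

open ComplexConjugate

/-- Estimate (4.28) in the proof of Lemma 4.6 (with explicit constant 4): for `z, w ∈ ℍ`
with `Im w ≤ Im z / 4`, the Green's function `G(ℍ; z, w) = log(|z − w̄|/|z − w|)`
satisfies `0 ≤ G(ℍ; z, w) ≤ 4 Im w / Im z`. -/
theorem green_bound_small_im (z w : ℂ) (hz : 0 < z.im) (hw : 0 < w.im)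
    (h : w.im ≤ z.im / 4) :
    0 ≤ Real.log (‖z - conj w‖ / ‖z - w‖) ∧
      Real.log (‖z - conj w‖ / ‖z - w‖) ≤ 4 * w.im / z.im := by
  set a := ‖z - conj w‖ with ha
  set b := ‖z - w‖ with hb
  have ha0 : 0 ≤ a := norm_nonneg _
  have hb0 : 0 ≤ b := norm_nonneg _
  have hasq : a ^ 2 = (z.re - w.re) ^ 2 + (z.im + w.im) ^ 2 := by
    rw [ha, Complex.sq_norm, Complex.normSq_apply]
    simp [Complex.sub_re, Complex.sub_im]
    ring
  have hbsq : b ^ 2 = (z.re - w.re) ^ 2 + (z.im - w.im) ^ 2 := by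
    rw [hb, Complex.sq_norm, Complex.normSq_apply]
    simp [Complex.sub_re, Complex.sub_im]
    ring
  have hble : z.im - w.im ≤ b := by
    calc z.im - w.im ≤ |z.im - w.im| := le_abs_self _
    _ = |(z - w).im| := by simp [Complex.sub_im]
    _ ≤ b := Complex.abs_im_le_norm _
  have hbpos : (0:ℝ) < b := lt_of_lt_of_le (by linarith) hble
  have hab : b ≤ a := by
    have : b ^ 2 ≤ a ^ 2 := by rw [hasq, hbsq]; nlinarith
    nlinarith
  have hdivpos : 0 < a / b := div_pos (lt_of_lt_of_le hbpos hab) hbpos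
  constructor
  · apply Real.log_nonneg
    rw [le_div_iff₀ hbpos]
    linarith
  · have hlog : Real.log (a / b) = Real.log ((a / b) ^ 2) / 2 := by
      rw [Real.log_pow]; push_cast; ring
    rw [hlog]
    have h1 : Real.log ((a / b) ^ 2) ≤ (a / b) ^ 2 - 1 :=
      Real.log_le_sub_one_of_pos (by positivity)
    have h2 : (a / b) ^ 2 - 1 = 4 * z.im * w.im / b ^ 2 := by
      rw [div_pow]
      field_simp
      rw [hasq, hbsq]; ring
    have h3 : 4 * z.im * w.im / b ^ 2 ≤ 8 * w.im / z.im := by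
      have hb2 : (z.im - w.im) ^ 2 ≤ b ^ 2 := pow_le_pow_left₀ (by linarith) hble 2
      rw [div_le_div_iff₀ (by positivity) hz]
      have h0 : (0:ℝ) ≤ z.im - 4 * w.im := by linarith
      nlinarith [mul_le_mul_of_nonneg_left hb2 hw.le,
        mul_nonneg hw.le (mul_nonneg hz.le h0),
        mul_nonneg hw.le (sq_nonneg w.im)]
    have h4 : 8 * w.im / z.im = 2 * (4 * w.im / z.im) := by ring
    linarith
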